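/- Let A be a real symmetric n×n matrix with spectral decomposition A = Σ_λ λ u_λ u_λᵀ, where the u_λ form an orthonormal basis of eigenvectors. Then the matrix A⁺ := Σ_{λ > 0} λ u_λ u_λᵀ is the projection of A onto the cone of positive semidefinite symmetric matrices with respect to the Frobenius norm; that is, A⁺ is PSD and ‖A − A⁺‖_F ≤ ‖A − X‖_F for every PSD symmetric matrix X. -/

import Mathlib

open Finset Matrix

lemma ipvv {n : ℕ} (c : Fin n → ℝ) (u : Fin n → Fin n → ℝ) (X : Matrix (Fin n) (Fin n) ℝ) :
    ∑ a, ∑ b, (∑ i, c i • Matrix.vecMulVec (u i) (u i)) a b * X a b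
      = ∑ i, c i * (u i ⬝ᵥ X *ᵥ u i) := by
  simp only [Matrix.sum_apply, Matrix.smul_apply, vecMulVec_apply, smul_eq_mul, dotProduct,
    mulVec, Finset.sum_mul, Finset.mul_sum]
  rw [Finset.sum_congr rfl (fun a _ => Finset.sum_comm (s := univ) (t := univ)
    (f := fun b i => c i * (u i a * u i b) * X a b)), Finset.sum_comm]
  exact Finset.sum_congr rfl fun i _ => Finset.sum_congr rfl fun a _ =>
    Finset.sum_congr rfl fun b _ => by ring

lemma quadvv {n : ℕ} (c : Fin n → ℝ) (u : Fin n → Fin n → ℝ) (x : Fin n → ℝ) :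
    x ⬝ᵥ (∑ i, c i • Matrix.vecMulVec (u i) (u i)) *ᵥ x = ∑ i, c i * (u i ⬝ᵥ x) ^ 2 := by
  simp only [dotProduct, mulVec, Matrix.sum_apply, Matrix.smul_apply, vecMulVec_apply,
    smul_eq_mul, Finset.sum_mul, Finset.mul_sum, pow_two]
  rw [Finset.sum_congr rfl (fun a _ => Finset.sum_comm (s := univ) (t := univ)
    (f := fun b i => x a * (c i * (u i a * u i b) * x b))), Finset.sum_comm]
  exact Finset.sum_congr rfl fun i _ => Finset.sum_congr rfl fun a _ =>
    Finset.sum_congr rfl fun b _ => by ring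

theorem stmt15 {n : ℕ} (A : Matrix (Fin n) (Fin n) ℝ) (hA : A.IsSymm)
    (μ : Fin n → ℝ) (u : Fin n → Fin n → ℝ)
    (horth : ∀ i j, u i ⬝ᵥ u j = if i = j then (1 : ℝ) else 0)
    (hdec : A = ∑ i, μ i • Matrix.vecMulVec (u i) (u i)) :
    let Aplus : Matrix (Fin n) (Fin n) ℝ :=
      ∑ i, max (μ i) 0 • Matrix.vecMulVec (u i) (u i)
    Aplus.PosSemidef ∧
    ∀ X : Matrix (Fin n) (Fin n) ℝ, X.PosSemidef →
      ∑ i, ∑ j, (A i j - Aplus i j) ^ 2 ≤ ∑ i, ∑ j, (A i j - X i j) ^ 2 := by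
  intro Aplus
  have hquadA : ∀ x : Fin n, u x ⬝ᵥ Aplus *ᵥ u x = max (μ x) 0 := by
    intro x
    rw [show Aplus = ∑ i, max (μ i) 0 • Matrix.vecMulVec (u i) (u i) from rfl, quadvv]
    rw [Finset.sum_congr rfl (fun i _ => by rw [horth i x])]
    simp [Finset.sum_ite_eq' univ x (fun i => max (μ i) 0)]
  have hN : A - Aplus = ∑ i, min (μ i) 0 • Matrix.vecMulVec (u i) (u i) := by
    rw [hdec, ← Finset.sum_sub_distrib]
    refine Finset.sum_congr rfl fun i _ => ?_
    rw [← sub_smul]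
    congr 1
    rcases le_total (μ i) 0 with h | h <;> simp [max_eq_left, max_eq_right, min_eq_left, min_eq_right, h]
  constructor
  · refine PosSemidef.of_dotProduct_mulVec_nonneg ?_ ?_
    · show (∑ i, max (μ i) 0 • Matrix.vecMulVec (u i) (u i)).IsHermitian
      ext i j
      simp only [conjTranspose_apply, Matrix.sum_apply, Matrix.smul_apply, vecMulVec_apply,
        smul_eq_mul, star_trivial]
      exact Finset.sum_congr rfl fun k _ => by ring
    · intro x
      have := quadvv (fun i => max (μ i) 0) u (fun i => x i)
      simp only [star_trivial]
      rw [show Aplus = ∑ i, max (μ i) 0 • Matrix.vecMulVec (u i) (u i) from rfl, quadvv]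
      exact Finset.sum_nonneg fun i _ => mul_nonneg (le_max_right _ _) (sq_nonneg _)
  · intro X hX
    have hNA : ∑ a, ∑ b, (A a b - Aplus a b) * Aplus a b = 0 := by
      have := ipvv (fun i => min (μ i) 0) u Aplus
      rw [← hN] at this
      simp only [Matrix.sub_apply] at this
      rw [this]
      refine Finset.sum_eq_zero fun i _ => ?_
      rw [hquadA i]
      rcases le_total (μ i) 0 with h | h <;>
        simp [min_eq_left, min_eq_right, max_eq_left, max_eq_right, h]
    have hNX : ∑ a, ∑ b, (A a b - Aplus a b) * X a b ≤ 0 := by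
      have := ipvv (fun i => min (μ i) 0) u X
      rw [← hN] at this
      simp only [Matrix.sub_apply] at this
      rw [this]
      refine Finset.sum_nonpos fun i _ => ?_
      have h1 : (0:ℝ) ≤ u i ⬝ᵥ X *ᵥ u i := by
        have := hX.dotProduct_mulVec_nonneg (u i); simpa using this
      exact mul_nonpos_of_nonpos_of_nonneg (min_le_right _ _) h1
    have key : ∀ a b, (A a b - X a b) ^ 2 = (A a b - Aplus a b) ^ 2
        + 2 * ((A a b - Aplus a b) * Aplus a b - (A a b - Aplus a b) * X a b)
        + (Aplus a b - X a b) ^ 2 := fun a b => by ring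
    calc ∑ a, ∑ b, (A a b - Aplus a b) ^ 2
        ≤ ∑ a, ∑ b, (A a b - Aplus a b) ^ 2
          + 2 * ((∑ a, ∑ b, (A a b - Aplus a b) * Aplus a b)
            - ∑ a, ∑ b, (A a b - Aplus a b) * X a b)
          + ∑ a, ∑ b, (Aplus a b - X a b) ^ 2 := by
          have h2 : 0 ≤ ∑ a, ∑ b, (Aplus a b - X a b) ^ 2 :=
            Finset.sum_nonneg fun a _ => Finset.sum_nonneg fun b _ => sq_nonneg _
          nlinarith [hNA, hNX]
      _ = ∑ a, ∑ b, (A a b - X a b) ^ 2 := by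
          simp only [key, Finset.sum_add_distrib, Finset.mul_sum, Finset.sum_sub_distrib, mul_sub]
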